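/- Let (n_1,...,n_k) be a partition of n and let T be a block matrix with upper triangular Toeplitz blocks. Define the k×k matrix Π(T) by Π(T)_{i,j} = t^{(1)}_{i,j} if n_i = n_j and 0 otherwise, where t^{(1)}_{i,j} is the leading Toeplitz entry of block T_{i,j}. Then T and Π(T) have the same set of eigenvalues (the eigenvalues of T are exactly the eigenvalues of Π(T), each with multiplicity multiplied appropriately: T is similar via a permutation to a direct sum of matrices of the form T̃_s ⊗ I_{s}). -/

import Mathlib

open Matrix

/-- A rectangular `p × q` matrix is upper triangular Toeplitz (top-right aligned when
`p ≤ q`, top-left aligned when `q ≤ p`). -/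
def IsUpperTriToeplitz {p q : ℕ} (M : Matrix (Fin p) (Fin q) ℂ) : Prop :=
  ∃ t : ℤ → ℂ, ∀ (a : Fin p) (b : Fin q),
    M a b = if max 0 ((q : ℤ) - (p : ℤ)) ≤ (b : ℤ) - (a : ℤ) then t ((b : ℤ) - (a : ℤ)) else 0

section Aux

variable {k : ℕ} {n : Fin k → ℕ}

lemma SpecPi.isNilpotent_of_strict {ι : Type*} [Fintype ι] [DecidableEq ι]
    (M : Matrix ι ι ℂ) (g : ι → ℤ) (h : ∀ p q, M p q ≠ 0 → g p < g q) :
    IsNilpotent M := by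
  have key : ∀ m : ℕ, ∀ p q, (M ^ m) p q ≠ 0 → g p + m ≤ g q := by
    intro m
    induction m with
    | zero =>
      intro p q hpq
      simp only [pow_zero] at hpq
      by_cases hpq' : p = q
      · subst hpq'; simp
      · exact absurd (Matrix.one_apply_ne hpq') hpq
    | succ m ih =>
      intro p q hpq
      rw [pow_succ, Matrix.mul_apply] at hpq
      obtain ⟨r, -, hr⟩ := Finset.exists_ne_zero_of_sum_ne_zero hpq
      have h1 := ih p r (left_ne_zero_of_mul hr)
      have h2 := h r q (right_ne_zero_of_mul hr)
      push_cast
      omega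
  rcases isEmpty_or_nonempty ι with hι | hι
  · exact ⟨1, by ext p q; exact absurd trivial (IsEmpty.elim hι p)⟩
  · have hne : (Finset.univ : Finset ι).Nonempty := Finset.univ_nonempty
    set lo := Finset.univ.inf' hne g with hlo
    set hi := Finset.univ.sup' hne g with hhi
    refine ⟨(hi - lo).toNat + 1, ?_⟩
    ext p q
    by_contra hpq
    have h1 := key _ p q hpq
    have h2 : lo ≤ g p := Finset.inf'_le _ (Finset.mem_univ p)
    have h3 : g q ≤ hi := Finset.le_sup' _ (Finset.mem_univ q)
    have h4 : lo ≤ hi := le_trans h2 (Finset.le_sup' _ (Finset.mem_univ p))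
    have h5 : ((hi - lo).toNat : ℤ) = hi - lo := Int.toNat_of_nonneg (by omega)
    push_cast at h1
    omega

lemma SpecPi.hzero_of_hT (T : Matrix ((i : Fin k) × Fin (n i)) ((i : Fin k) × Fin (n i)) ℂ)
    (hT : ∀ i j : Fin k, IsUpperTriToeplitz
      (Matrix.of fun (a : Fin (n i)) (b : Fin (n j)) => T ⟨i, a⟩ ⟨j, b⟩))
    (i j : Fin k) (a : Fin (n i)) (b : Fin (n j))
    (h : (b : ℤ) - (a : ℤ) < max 0 ((n j : ℤ) - (n i : ℤ))) : T ⟨i, a⟩ ⟨j, b⟩ = 0 := by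
  obtain ⟨t, ht⟩ := hT i j
  have := ht a b
  simp only [Matrix.of_apply] at this
  rw [this, if_neg (not_le.2 h)]

lemma SpecPi.htoe_of_hT (T : Matrix ((i : Fin k) × Fin (n i)) ((i : Fin k) × Fin (n i)) ℂ)
    (hT : ∀ i j : Fin k, IsUpperTriToeplitz
      (Matrix.of fun (a : Fin (n i)) (b : Fin (n j)) => T ⟨i, a⟩ ⟨j, b⟩))
    (i j : Fin k) (a a' : Fin (n i)) (b b' : Fin (n j))
    (h : max 0 ((n j : ℤ) - (n i : ℤ)) ≤ (b : ℤ) - (a : ℤ))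
    (hd : (b : ℤ) - (a : ℤ) = (b' : ℤ) - (a' : ℤ)) :
    T ⟨i, a⟩ ⟨j, b⟩ = T ⟨i, a'⟩ ⟨j, b'⟩ := by
  obtain ⟨t, ht⟩ := hT i j
  have h1 := ht a b
  have h2 := ht a' b'
  simp only [Matrix.of_apply] at h1 h2
  rw [h1, h2, if_pos h, if_pos (hd ▸ h), hd]

lemma SpecPi.sum_subtype_dite (s : ℕ) (f : {i : Fin k // s < n i} → ℂ) :
    ∑ j : {i : Fin k // s < n i}, f j = ∑ j : Fin k, if h : s < n j then f ⟨j, h⟩ else 0 := by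
  have h1 := Finset.sum_subtype_eq_sum_filter
    (fun j : Fin k => if h : s < n j then f ⟨j, h⟩ else 0) (s := Finset.univ)
    (p := fun j => s < n j)
  rw [Finset.subtype_univ, Finset.sum_filter] at h1
  calc ∑ j : {i : Fin k // s < n i}, f j
      = ∑ j : {i : Fin k // s < n i},
          (if h : s < n (j : Fin k) then f ⟨(j : Fin k), h⟩ else 0) := by
        refine Finset.sum_congr rfl fun j _ => ?_; rw [dif_pos j.2]
    _ = ∑ j : Fin k, if h : s < n j then f ⟨j, h⟩ else 0 := by
        rw [h1]
        refine Finset.sum_congr rfl fun j _ => ?_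
        by_cases h : s < n j <;> simp [h]

lemma SpecPi.isUnit_iff_pi (hn : ∀ i, 0 < n i)
    (T : Matrix ((i : Fin k) × Fin (n i)) ((i : Fin k) × Fin (n i)) ℂ)
    (hT : ∀ i j : Fin k, IsUpperTriToeplitz
      (Matrix.of fun (a : Fin (n i)) (b : Fin (n j)) => T ⟨i, a⟩ ⟨j, b⟩)) :
    IsUnit T ↔ IsUnit ((Matrix.of fun i j : Fin k =>
      if n i = n j then T ⟨i, ⟨0, hn i⟩⟩ ⟨j, ⟨0, hn j⟩⟩ else 0)) := by
  set B : Matrix (Fin k) (Fin k) ℂ := Matrix.of fun i j : Fin k =>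
      if n i = n j then T ⟨i, ⟨0, hn i⟩⟩ ⟨j, ⟨0, hn j⟩⟩ else 0 with hBdef
  have hBapp : ∀ i j, B i j = if n i = n j then T ⟨i, ⟨0, hn i⟩⟩ ⟨j, ⟨0, hn j⟩⟩ else 0 :=
    fun i j => rfl
  have hzero := SpecPi.hzero_of_hT T hT
  have htoe := SpecPi.htoe_of_hT T hT
  have hmul : ∀ (y : Fin k → ℂ) (i : Fin k) (a : Fin (n i)),
      (T *ᵥ (fun p : (i : Fin k) × Fin (n i) => if (p.2 : ℕ) = 0 then y p.1 else 0)) ⟨i, a⟩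
        = ∑ j : Fin k, T ⟨i, a⟩ ⟨j, ⟨0, hn j⟩⟩ * y j := by
    intro y i a
    rw [Matrix.mulVec, dotProduct, ← Finset.univ_sigma_univ, Finset.sum_sigma]
    refine Finset.sum_congr rfl fun j _ => ?_
    rw [Finset.sum_eq_single (⟨0, hn j⟩ : Fin (n j))]
    · simp
    · intro b _ hb
      have : (b : ℕ) ≠ 0 := fun h => hb (Fin.ext h)
      simp [this]
    · simp
  constructor
  · -- T invertible → B invertible
    intro hTu
    have hTinj : ∀ x, T *ᵥ x = 0 → x = 0 := by
      intro x hx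
      have hdT := (Matrix.isUnit_iff_isUnit_det T).mp hTu
      calc x = (T⁻¹ * T) *ᵥ x := by rw [Matrix.nonsing_inv_mul T hdT, Matrix.one_mulVec]
        _ = T⁻¹ *ᵥ (T *ᵥ x) := (Matrix.mulVec_mulVec x T⁻¹ T).symm
        _ = 0 := by rw [hx, Matrix.mulVec_zero]
    by_contra hBu
    have hdet : B.det = 0 := by
      by_contra hd
      exact hBu ((Matrix.isUnit_iff_isUnit_det B).mpr (isUnit_iff_ne_zero.mpr hd))
    obtain ⟨v, hv0, hv⟩ := Matrix.exists_mulVec_eq_zero_iff.mpr hdet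
    obtain ⟨i₀, hi₀⟩ := Function.ne_iff.mp hv0
    simp only [Pi.zero_apply] at hi₀
    set s := n i₀ with hs
    set v' : Fin k → ℂ := fun i => if n i = s then v i else 0 with hv'def
    have hBv' : B *ᵥ v' = 0 := by
      funext i
      show ∑ j, B i j * v' j = 0
      by_cases hi : n i = s
      · have he : ∀ j, B i j * v' j = B i j * v j := by
          intro j
          by_cases hj : n j = s
          · simp only [hv'def]; rw [if_pos hj]
          · have hzB : B i j = 0 := by
              rw [hBapp, if_neg (by rw [hi]; exact fun h => hj h.symm)]
            rw [hzB, zero_mul, zero_mul]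
        rw [Finset.sum_congr rfl fun j _ => he j]
        have hvi := congrFun hv i
        simpa [Matrix.mulVec, dotProduct] using hvi
      · refine Finset.sum_eq_zero fun j _ => ?_
        by_cases hj : n j = s
        · have hzB : B i j = 0 := by rw [hBapp, if_neg (by rw [hj]; exact hi)]
          rw [hzB, zero_mul]
        · simp only [hv'def]; rw [if_neg hj, mul_zero]
    set C : Matrix {i : Fin k // s < n i} {i : Fin k // s < n i} ℂ :=
      Matrix.of (fun i j => T ⟨i.1, ⟨0, hn i.1⟩⟩ ⟨j.1, ⟨0, hn j.1⟩⟩) with hCdef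
    set ext0 : ({i : Fin k // s < n i} → ℂ) → (((i : Fin k) × Fin (n i)) → ℂ) :=
      fun u p => if h : (p.2 : ℕ) = 0 ∧ s < n p.1 then u ⟨p.1, h.2⟩ else 0 with hextdef
    have hext_eq : ∀ u, ext0 u = fun p => if (p.2 : ℕ) = 0 then
        (fun j => if h : s < n j then u ⟨j, h⟩ else 0) p.1 else 0 := by
      intro u; funext p
      by_cases h1 : (p.2 : ℕ) = 0 <;> by_cases h2 : s < n p.1 <;>
        simp [hextdef, h1, h2]
    have hTe : ∀ u, T *ᵥ ext0 u = ext0 (C *ᵥ u) := by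
      intro u
      funext p
      obtain ⟨i, a⟩ := p
      have hL : (T *ᵥ ext0 u) ⟨i, a⟩
          = ∑ j : Fin k, T ⟨i, a⟩ ⟨j, ⟨0, hn j⟩⟩ * (if h : s < n j then u ⟨j, h⟩ else 0) := by
        rw [hext_eq u]
        exact hmul (fun j => if h : s < n j then u ⟨j, h⟩ else 0) i a
      rw [hL]
      by_cases ha : (a : ℕ) = 0
      · have ha' : a = ⟨0, hn i⟩ := Fin.ext ha
        subst ha'
        by_cases hi : s < n i
        · have hRHS : ext0 (C *ᵥ u) ⟨i, ⟨0, hn i⟩⟩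
              = ∑ j : {i' : Fin k // s < n i'}, C ⟨i, hi⟩ j * u j := by
            simp only [hextdef]
            rw [dif_pos (show _ ∧ _ from ⟨by simp, hi⟩)]
            rfl
          rw [hRHS, SpecPi.sum_subtype_dite s (fun j => C ⟨i, hi⟩ j * u j)]
          refine Finset.sum_congr rfl fun j _ => ?_
          by_cases hj : s < n j
          · rw [dif_pos hj, dif_pos hj]
            rfl
          · rw [dif_neg hj, dif_neg hj, mul_zero]
        · simp only [hextdef]
          rw [dif_neg (by simp [hi])]
          refine Finset.sum_eq_zero fun j _ => ?_
          by_cases hj : s < n j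
          · rw [hzero i j ⟨0, hn i⟩ ⟨0, hn j⟩ ?_, zero_mul]
            have h2 : (0 : ℤ) < (n j : ℤ) - (n i : ℤ) := by
              have := not_lt.mp hi
              omega
            calc ((⟨0, hn j⟩ : Fin (n j)) : ℤ) - ((⟨0, hn i⟩ : Fin (n i)) : ℤ) = 0 := by simp
              _ < max 0 ((n j : ℤ) - (n i : ℤ)) := lt_max_of_lt_right h2
          · rw [dif_neg hj, mul_zero]
      · simp only [hextdef]
        rw [dif_neg (by simp [ha])]
        refine Finset.sum_eq_zero fun j _ => ?_
        rw [hzero i j a ⟨0, hn j⟩ ?_, zero_mul]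
        have h1 : 0 < ((a : ℕ) : ℤ) := by exact_mod_cast Nat.pos_of_ne_zero ha
        calc ((⟨0, hn j⟩ : Fin (n j)) : ℤ) - (a : ℤ) = -(a : ℤ) := by simp
          _ < 0 := by omega
          _ ≤ max 0 ((n j : ℤ) - (n i : ℤ)) := le_max_left _ _
    set w : ((i : Fin k) × Fin (n i)) → ℂ :=
      fun p => if (p.2 : ℕ) = 0 then v' p.1 else 0 with hwdef
    set u₀ : {i : Fin k // s < n i} → ℂ :=
      fun i => ∑ j : Fin k, T ⟨i.1, ⟨0, hn i.1⟩⟩ ⟨j, ⟨0, hn j⟩⟩ * v' j with hu0def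
    have hTw : T *ᵥ w = ext0 u₀ := by
      funext p
      obtain ⟨i, a⟩ := p
      rw [hwdef, hmul v' i a]
      by_cases ha : (a : ℕ) = 0
      · have ha' : a = ⟨0, hn i⟩ := Fin.ext ha
        subst ha'
        by_cases hi : s < n i
        · simp only [hextdef]
          rw [dif_pos (show _ ∧ _ from ⟨by simp, hi⟩)]
        · simp only [hextdef]
          rw [dif_neg (by simp [hi])]
          rcases lt_or_eq_of_le (not_lt.mp hi) with hlt | heq
          · refine Finset.sum_eq_zero fun j _ => ?_
            by_cases hj : n j = s
            · rw [hzero i j ⟨0, hn i⟩ ⟨0, hn j⟩ ?_, zero_mul]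
              have h2 : (0 : ℤ) < (n j : ℤ) - (n i : ℤ) := by omega
              calc ((⟨0, hn j⟩ : Fin (n j)) : ℤ) - ((⟨0, hn i⟩ : Fin (n i)) : ℤ) = 0 := by simp
                _ < max 0 ((n j : ℤ) - (n i : ℤ)) := lt_max_of_lt_right h2
            · simp only [hv'def]; rw [if_neg hj, mul_zero]
          · have he : ∀ j, T ⟨i, ⟨0, hn i⟩⟩ ⟨j, ⟨0, hn j⟩⟩ * v' j = B i j * v' j := by
              intro j
              by_cases hj : n j = s
              · have hij : n i = n j := by rw [heq, hj]
                rw [hBapp, if_pos hij]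
              · simp only [hv'def]; rw [if_neg hj, mul_zero, mul_zero]
            rw [Finset.sum_congr rfl fun j _ => he j]
            have hvi := congrFun hBv' i
            simpa [Matrix.mulVec, dotProduct] using hvi
      · simp only [hextdef]
        rw [dif_neg (by simp [ha])]
        refine Finset.sum_eq_zero fun j _ => ?_
        rw [hzero i j a ⟨0, hn j⟩ ?_, zero_mul]
        have h1 : 0 < ((a : ℕ) : ℤ) := by exact_mod_cast Nat.pos_of_ne_zero ha
        calc ((⟨0, hn j⟩ : Fin (n j)) : ℤ) - (a : ℤ) = -(a : ℤ) := by simp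
          _ < 0 := by omega
          _ ≤ max 0 ((n j : ℤ) - (n i : ℤ)) := le_max_left _ _
    have hCdet : C.det ≠ 0 := by
      intro hdC
      obtain ⟨u, hu0, hu⟩ := Matrix.exists_mulVec_eq_zero_iff.mpr hdC
      have hextz : ext0 (0 : {i : Fin k // s < n i} → ℂ) = 0 := by
        funext p
        simp only [hextdef, Pi.zero_apply]
        split <;> rfl
      have h1 : T *ᵥ ext0 u = 0 := by rw [hTe u, hu, hextz]
      have h2 := hTinj _ h1
      apply hu0
      funext j
      have h3 := congrFun h2 ⟨j.1, ⟨0, hn j.1⟩⟩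
      simp only [hextdef, Pi.zero_apply] at h3
      rw [dif_pos (show _ ∧ _ from ⟨by simp, j.2⟩)] at h3
      simpa using h3
    have hCu : C *ᵥ (C⁻¹ *ᵥ u₀) = u₀ := by
      rw [Matrix.mulVec_mulVec, Matrix.mul_nonsing_inv C (isUnit_iff_ne_zero.mpr hCdet),
        Matrix.one_mulVec]
    have hx : T *ᵥ (w - ext0 (C⁻¹ *ᵥ u₀)) = 0 := by
      rw [Matrix.mulVec_sub, hTw, hTe, hCu, sub_self]
    have hx0 := hTinj _ hx
    have hw1 : w ⟨i₀, ⟨0, hn i₀⟩⟩ = v i₀ := by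
      simp only [hwdef, hv'def]
      simp
      exact fun h => absurd hs.symm h
    have he1 : ext0 (C⁻¹ *ᵥ u₀) ⟨i₀, ⟨0, hn i₀⟩⟩ = 0 := by
      simp only [hextdef]
      rw [dif_neg]
      rintro ⟨-, h⟩
      rw [← hs] at h
      exact lt_irrefl _ h
    have hfin := congrFun hx0 ⟨i₀, ⟨0, hn i₀⟩⟩
    rw [Pi.sub_apply, hw1, he1, sub_zero, Pi.zero_apply] at hfin
    exact hi₀ hfin
  · -- B invertible → T invertible
    intro hBu
    have hBdet : IsUnit B.det := (Matrix.isUnit_iff_isUnit_det B).mp hBu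
    have hBBinv : B * B⁻¹ = 1 := Matrix.mul_nonsing_inv B hBdet
    set S : Matrix ((i : Fin k) × Fin (n i)) ((i : Fin k) × Fin (n i)) ℂ :=
      fun p q => if n p.1 = n q.1 ∧ (p.2 : ℕ) = (q.2 : ℕ) then B⁻¹ p.1 q.1 else 0 with hSdef
    have hTS : ∀ (i j : Fin k) (a : Fin (n i)) (b : Fin (n j)),
        (T * S) ⟨i, a⟩ ⟨j, b⟩ = ∑ l : Fin k, (if h : n l = n j then
          T ⟨i, a⟩ ⟨l, ⟨(b : ℕ), lt_of_lt_of_le b.isLt (le_of_eq h.symm)⟩⟩ * B⁻¹ l j else 0) := by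
      intro i j a b
      rw [Matrix.mul_apply, ← Finset.univ_sigma_univ, Finset.sum_sigma]
      refine Finset.sum_congr rfl fun l _ => ?_
      by_cases h : n l = n j
      · rw [dif_pos h]
        rw [Finset.sum_eq_single (⟨(b : ℕ), lt_of_lt_of_le b.isLt (le_of_eq h.symm)⟩ : Fin (n l))]
        · simp only [hSdef]
          rw [if_pos (show _ ∧ _ from ⟨h, by simp⟩)]
        · intro c _ hc
          have hcb : (c : ℕ) ≠ (b : ℕ) := fun hcb => hc (Fin.ext hcb)
          simp only [hSdef]
          rw [if_neg (fun hh => hcb hh.2), mul_zero]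
        · simp
      · rw [dif_neg h]
        refine Finset.sum_eq_zero fun c _ => ?_
        simp only [hSdef]
        rw [if_neg (fun hh => h hh.1), mul_zero]
    have hN : ∀ p q : (i : Fin k) × Fin (n i), (1 - T * S) p q ≠ 0 →
        2 * ((p.2 : ℕ) : ℤ) - (n p.1 : ℤ) < 2 * ((q.2 : ℕ) : ℤ) - (n q.1 : ℤ) := by
      rintro ⟨i, a⟩ ⟨j, b⟩ hne
      by_contra hf
      push_neg at hf
      dsimp only at hf
      apply hne
      have hsplit : (1 - T * S) ⟨i, a⟩ ⟨j, b⟩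
          = (1 : Matrix ((i : Fin k) × Fin (n i)) ((i : Fin k) × Fin (n i)) ℂ)
              ⟨i, a⟩ ⟨j, b⟩ - (T * S) ⟨i, a⟩ ⟨j, b⟩ := rfl
      rw [hsplit, hTS]
      by_cases hc : max 0 ((n j : ℤ) - (n i : ℤ)) ≤ (b : ℤ) - (a : ℤ)
      · obtain ⟨hc1, hc2⟩ := max_le_iff.mp hc
        have hab : (a : ℕ) = (b : ℕ) := by omega
        have hnij : n i = n j := by omega
        have h1 : ∀ l : Fin k, (if h : n l = n j then
            T ⟨i, a⟩ ⟨l, ⟨(b : ℕ), lt_of_lt_of_le b.isLt (le_of_eq h.symm)⟩⟩ * B⁻¹ l j else 0)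
              = B i l * B⁻¹ l j := by
          intro l
          by_cases h : n l = n j
          · rw [dif_pos h]
            have hE : T ⟨i, a⟩ ⟨l, ⟨(b : ℕ), lt_of_lt_of_le b.isLt (le_of_eq h.symm)⟩⟩
                = T ⟨i, ⟨0, hn i⟩⟩ ⟨l, ⟨0, hn l⟩⟩ := by
              apply htoe
              · have e0 : (n l : ℤ) - (n i : ℤ) = 0 := by omega
                rw [e0, max_self]
                simp only [Fin.val_mk]
                omega
              · simp only [Fin.val_mk]
                push_cast
                omega
            rw [hE, hBapp, if_pos (by omega : n i = n l)]
          · rw [dif_neg h, hBapp, if_neg (by omega : ¬ n i = n l), zero_mul]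
        rw [Finset.sum_congr rfl fun l _ => h1 l]
        have h2 : ∑ l, B i l * B⁻¹ l j = (1 : Matrix (Fin k) (Fin k) ℂ) i j := by
          rw [← Matrix.mul_apply, hBBinv]
        rw [h2]
        by_cases hij : i = j
        · subst hij
          have hab' : a = b := Fin.ext hab
          subst hab'
          rw [Matrix.one_apply_eq, Matrix.one_apply_eq, sub_self]
        · rw [Matrix.one_apply_ne (fun hh => hij (congrArg Sigma.fst hh)),
            Matrix.one_apply_ne hij, sub_zero]
      · push_neg at hc
        have h1 : ∀ l : Fin k, (if h : n l = n j then
            T ⟨i, a⟩ ⟨l, ⟨(b : ℕ), lt_of_lt_of_le b.isLt (le_of_eq h.symm)⟩⟩ * B⁻¹ l j else 0)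
              = 0 := by
          intro l
          by_cases h : n l = n j
          · rw [dif_pos h, hzero i l a ⟨(b : ℕ), lt_of_lt_of_le b.isLt (le_of_eq h.symm)⟩ ?_,
              zero_mul]
            simp only [Fin.val_mk]
            rw [h]
            exact hc
          · rw [dif_neg h]
        rw [Finset.sum_congr rfl fun l _ => h1 l, Finset.sum_const_zero]
        have hne' : (⟨i, a⟩ : (i : Fin k) × Fin (n i)) ≠ ⟨j, b⟩ := by
          intro hh
          cases hh
          simp at hc
        rw [Matrix.one_apply_ne hne', sub_zero]
    have hnil := SpecPi.isNilpotent_of_strict (1 - T * S)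
      (fun p => 2 * ((p.2 : ℕ) : ℤ) - (n p.1 : ℤ)) hN
    have hTSu : IsUnit (T * S) := by
      have h := hnil.isUnit_one_sub
      rwa [sub_sub_cancel] at h
    exact (Matrix.isUnit_iff_isUnit_det T).mpr
      (isUnit_of_mul_isUnit_left
        (by rw [← Matrix.det_mul]; exact (Matrix.isUnit_iff_isUnit_det _).mp hTSu))

end Aux

/-- For a block matrix `T` with upper triangular Toeplitz blocks, the `k × k` matrix
`Π(T)` of leading entries of the square blocks (and zeros elsewhere) has the same set of
eigenvalues as `T`. -/
theorem spectrum_eq_spectrum_pi_of_blockToeplitz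
    {k : ℕ} (n : Fin k → ℕ) (hn : ∀ i, 0 < n i)
    (T : Matrix ((i : Fin k) × Fin (n i)) ((i : Fin k) × Fin (n i)) ℂ)
    (hT : ∀ i j : Fin k, IsUpperTriToeplitz
      (Matrix.of fun (a : Fin (n i)) (b : Fin (n j)) => T ⟨i, a⟩ ⟨j, b⟩)) :
    spectrum ℂ T =
      spectrum ℂ (Matrix.of fun i j : Fin k =>
        if n i = n j then T ⟨i, ⟨0, hn i⟩⟩ ⟨j, ⟨0, hn j⟩⟩ else 0) := by
  ext lam
  rw [spectrum.mem_iff, spectrum.mem_iff]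
  set M : Matrix ((i : Fin k) × Fin (n i)) ((i : Fin k) × Fin (n i)) ℂ :=
    algebraMap ℂ _ lam - T with hMdef
  have hM : ∀ i j : Fin k, IsUpperTriToeplitz
      (Matrix.of fun (a : Fin (n i)) (b : Fin (n j)) => M ⟨i, a⟩ ⟨j, b⟩) := by
    intro i j
    obtain ⟨t, ht⟩ := hT i j
    refine ⟨fun d => (if i = j ∧ d = 0 then lam else 0) - t d, fun a b => ?_⟩
    have hMe : M ⟨i, a⟩ ⟨j, b⟩
        = (if (⟨i, a⟩ : (i : Fin k) × Fin (n i)) = ⟨j, b⟩ then lam else 0) - T ⟨i, a⟩ ⟨j, b⟩ := by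
      simp only [hMdef, Matrix.sub_apply, Matrix.algebraMap_matrix_apply]
      simp
    have hTe := ht a b
    simp only [Matrix.of_apply] at hTe ⊢
    have hpq : ((⟨i, a⟩ : (i : Fin k) × Fin (n i)) = ⟨j, b⟩) ↔
        (i = j ∧ (b : ℤ) - (a : ℤ) = 0) := by
      constructor
      · intro h
        cases h
        exact ⟨rfl, by omega⟩
      · rintro ⟨h1, h2⟩
        subst h1
        have : a = b := Fin.ext (by omega)
        rw [this]
    by_cases hcond : max 0 ((n j : ℤ) - (n i : ℤ)) ≤ (b : ℤ) - (a : ℤ)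
    · rw [if_pos hcond, hMe, hTe, if_pos hcond]
      congr 1
      rw [if_congr hpq rfl rfl]
    · rw [if_neg hcond, hMe, hTe, if_neg hcond, sub_zero, if_neg]
      intro h
      rw [hpq] at h
      obtain ⟨h1, h2⟩ := h
      subst h1
      apply hcond
      rw [h2]
      simp
  have key := SpecPi.isUnit_iff_pi hn M hM
  have hPiM : (Matrix.of fun i j : Fin k =>
      if n i = n j then M ⟨i, ⟨0, hn i⟩⟩ ⟨j, ⟨0, hn j⟩⟩ else 0)
        = algebraMap ℂ (Matrix (Fin k) (Fin k) ℂ) lam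
          - (Matrix.of fun i j : Fin k =>
            if n i = n j then T ⟨i, ⟨0, hn i⟩⟩ ⟨j, ⟨0, hn j⟩⟩ else 0) := by
    ext i j
    simp only [Matrix.of_apply, Matrix.sub_apply, Matrix.algebraMap_matrix_apply]
    by_cases hij : n i = n j
    · rw [if_pos hij, if_pos hij]
      simp only [hMdef, Matrix.sub_apply, Matrix.algebraMap_matrix_apply]
      have hiff : ((⟨i, ⟨0, hn i⟩⟩ : (i : Fin k) × Fin (n i)) = ⟨j, ⟨0, hn j⟩⟩) ↔ i = j := by
        constructor
        · intro h
          cases h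
          rfl
        · intro h
          subst h
          rfl
      rw [if_congr hiff rfl rfl]
    · rw [if_neg hij, if_neg hij]
      have : i ≠ j := fun h => hij (by rw [h])
      rw [if_neg this, sub_zero]
  rw [hPiM] at key
  exact not_congr key
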